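/- Confounding-function-adjusted outcomes remove the bias (Theorem 2): define the adjusted outcome Ycf ω := Yobs ω − Σ_{l ∈ J, l ≠ A ω} p(l)·c(A ω, l). Then for any two distinct treatments j, k ∈ J, E[Ycf | A = j] − E[Ycf | A = k] = E[Y j − Y k]; that is, the estimand based on the adjusted outcomes equals the true average treatment effect. -/

import Mathlib

open MeasureTheory ProbabilityTheory

noncomputable section

variable {Ω J : Type*}

/-- `condMean μ A Z j` is `E[Z | A = j]`, the mean of `Z` under the conditional
measure `μ[|{A = j}]`. -/
def condMean [MeasurableSpace Ω] (μ : Measure Ω) (A : Ω → J) (Z : Ω → ℝ) (j : J) : ℝ :=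
  ∫ ω, Z ω ∂(μ[|{ω | A ω = j}])

/-- `treatProb μ A j` is `p(j) = μ{ω : A ω = j}`. -/
def treatProb [MeasurableSpace Ω] (μ : Measure Ω) (A : Ω → J) (j : J) : ℝ :=
  (μ {ω | A ω = j}).toReal

/-- The confounding function `c(j,k) = E[Y j | A = j] - E[Y j | A = k]`. -/
def confFun [MeasurableSpace Ω] (μ : Measure Ω) (A : Ω → J) (Y : J → Ω → ℝ) (j k : J) : ℝ :=
  condMean μ A (Y j) j - condMean μ A (Y j) k

/-- The confounding-function-adjusted outcome
`Ycf ω = Yobs ω - ∑_{l ≠ A ω} p(l) · c(A ω, l)`. -/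
def adjOutcome [MeasurableSpace Ω] [Fintype J] [DecidableEq J]
    (μ : Measure Ω) (A : Ω → J) (Y : J → Ω → ℝ) (ω : Ω) : ℝ :=
  Y (A ω) ω -
    ∑ l ∈ Finset.univ.filter (fun l => l ≠ A ω), treatProb μ A l * confFun μ A Y (A ω) l

lemma condMean_eq [MeasurableSpace Ω] (μ : Measure Ω) (A : Ω → J) (Z : Ω → ℝ) (j : J) :
    condMean μ A Z j = (treatProb μ A j)⁻¹ * ∫ ω in {ω | A ω = j}, Z ω ∂μ := by
  rw [condMean, ProbabilityTheory.cond, integral_smul_measure, treatProb,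
    ENNReal.toReal_inv, smul_eq_mul]

lemma total_sum [MeasurableSpace Ω] (μ : Measure Ω) [IsProbabilityMeasure μ]
    [Fintype J] [DecidableEq J] [MeasurableSpace J] [MeasurableSingletonClass J]
    (A : Ω → J) (hA : Measurable A) (Z : Ω → ℝ) (hZ : Integrable Z μ) :
    ∑ l : J, ∫ ω in {ω | A ω = l}, Z ω ∂μ = ∫ ω, Z ω ∂μ := by
  have hmeas : ∀ l : J, MeasurableSet {ω | A ω = l} := fun l =>
    hA (measurableSet_singleton l)
  have hunion : (⋃ l ∈ (Finset.univ : Finset J), {ω | A ω = l}) = Set.univ := by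
    ext ω; simp
  rw [← setIntegral_univ, ← hunion, integral_biUnion_finset]
  · exact fun l _ => hmeas l
  · intro l _ l' _ hll'
    exact Set.disjoint_left.2 fun ω h h' => hll' (h.symm.trans h')
  · exact fun l _ => hZ.integrableOn

theorem adjusted_outcome_removes_bias
    [MeasurableSpace Ω] (μ : Measure Ω) [IsProbabilityMeasure μ]
    [Fintype J] [Nonempty J] [DecidableEq J] [MeasurableSpace J] [MeasurableSingletonClass J]
    (A : Ω → J) (hA : Measurable A)
    (Y : J → Ω → ℝ) (hY : ∀ j, Integrable (Y j) μ)
    (hp : ∀ j, 0 < treatProb μ A j)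
    (j k : J) (hjk : j ≠ k) :
    condMean μ A (adjOutcome μ A Y) j - condMean μ A (adjOutcome μ A Y) k
      = ∫ ω, (Y j ω - Y k ω) ∂μ := by
  have hmeas : ∀ l : J, MeasurableSet {ω | A ω = l} := fun l =>
    hA (measurableSet_singleton l)
  have key : ∀ i : J, condMean μ A (adjOutcome μ A Y) i = ∫ ω, Y i ω ∂μ := by
    intro i
    set p : J → ℝ := treatProb μ A
    set C : ℝ := ∑ l ∈ Finset.univ.filter (fun l => l ≠ i), p l * confFun μ A Y i l with hC
    -- p l * condMean (Y i) l = ∫_{A = l} Y i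
    have hpl : ∀ l : J, p l * condMean μ A (Y i) l = ∫ ω in {ω | A ω = l}, Y i ω ∂μ := by
      intro l
      rw [condMean_eq]
      field_simp [(hp l).ne']
      exact mul_div_cancel_left₀ _ (hp l).ne'
    -- sum of p l = 1
    have hsump : ∑ l : J, p l = 1 := by
      have := total_sum μ A hA (fun _ => (1 : ℝ)) (integrable_const 1)
      simpa [treatProb, p, measure_lt_top, measureReal_def] using this
    -- set integral of adjOutcome on {A = i}
    have hset : ∫ ω in {ω | A ω = i}, adjOutcome μ A Y ω ∂μ
        = (∫ ω in {ω | A ω = i}, Y i ω ∂μ) - p i * C := by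
      have hcongr : ∫ ω in {ω | A ω = i}, adjOutcome μ A Y ω ∂μ
          = ∫ ω in {ω | A ω = i}, (Y i ω - C) ∂μ := by
        refine setIntegral_congr_fun (hmeas i) ?_
        intro ω hω
        have : A ω = i := hω
        simp [adjOutcome, this, hC, p]
      rw [hcongr, integral_sub ((hY i).integrableOn) (integrableOn_const (measure_ne_top _ _)),
        setIntegral_const, smul_eq_mul]
      rfl
    -- condMean of adjOutcome at i
    have h1 : condMean μ A (adjOutcome μ A Y) i = condMean μ A (Y i) i - C := by
      rw [condMean_eq, hset, mul_sub, ← condMean_eq]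
      congr 1
      field_simp [(hp i).ne']
      exact mul_div_cancel_left₀ _ (hp i).ne'
    -- compute C
    have hC' : C = condMean μ A (Y i) i - ∫ ω, Y i ω ∂μ := by
      have hfilter : (Finset.univ.filter (fun l => l ≠ i)) = Finset.univ.erase i := by
        ext l; simp [Finset.mem_erase, and_comm]
      rw [hC, hfilter]
      have : ∀ l : J, p l * confFun μ A Y i l
          = p l * condMean μ A (Y i) i - ∫ ω in {ω | A ω = l}, Y i ω ∂μ := by
        intro l
        rw [confFun, mul_sub, hpl]
      simp_rw [this]
      rw [Finset.sum_sub_distrib, ← Finset.sum_mul,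
        Finset.sum_erase_eq_sub (Finset.mem_univ i),
        Finset.sum_erase_eq_sub (Finset.mem_univ i), hsump,
        total_sum μ A hA (Y i) (hY i), ← hpl]
      ring
    rw [h1, hC']
    ring
  rw [key j, key k, ← integral_sub (hY j) (hY k)]

end
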